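/- For any vertex-transitive finite graph Γ (simple, undirected), the product of its clique number and its independence number is at most the number of vertices: ω(Γ)·α(Γ) ≤ |V(Γ)|. -/

import Mathlib

open SimpleGraph

/-- The independence number of a graph: the clique number of its complement. -/
noncomputable def SimpleGraph.indepNumCompl {V : Type*} (G : SimpleGraph V) : ℕ :=
  Gᶜ.cliqueNum

/-- A graph is vertex-transitive if its automorphism group is transitive on vertices. -/
def SimpleGraph.IsVertexTransitive {V : Type*} (G : SimpleGraph V) : Prop :=
  ∀ u v : V, ∃ φ : G ≃g G, φ u = v

theorem stmt_0 {V : Type*} [Fintype V] (G : SimpleGraph V)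
    (hvt : G.IsVertexTransitive) :
    G.cliqueNum * G.indepNumCompl ≤ Fintype.card V := by
  classical
  rcases isEmpty_or_nonempty V with hV | hV
  · have : G.cliqueNum = 0 := by
      obtain ⟨K, hK⟩ := G.exists_isNClique_cliqueNum
      have hKe : K = ∅ := Finset.eq_empty_of_isEmpty K
      rw [← hK.card_eq, hKe, Finset.card_empty]
    simp [this]
  obtain ⟨K, hK⟩ := G.exists_isNClique_cliqueNum
  obtain ⟨I, hI⟩ := Gᶜ.exists_isNClique_cliqueNum
  haveI : Fintype (G ≃g G) :=
    Fintype.ofInjective (fun g : G ≃g G => (g : V ≃ V))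
      (fun a b h => by cases a; cases b; simp only [RelIso.mk.injEq]; exact h)
  set n := Fintype.card V with hn
  set A := Fintype.card (G ≃g G) with hA
  set F : V → V → Finset (G ≃g G) :=
    fun k i => Finset.univ.filter (fun g : G ≃g G => g k = i) with hF
  -- all fibers have the same cardinality
  have hfib : ∀ k i k' i', (F k i).card = (F k' i').card := by
    intro k i k' i'
    obtain ⟨φ, hφ⟩ := hvt k' k
    obtain ⟨ψ, hψ⟩ := hvt i i'
    apply Finset.card_bij' (fun g _ => φ.trans (g.trans ψ))
      (fun g _ => φ.symm.trans (g.trans ψ.symm))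
    · intro g hg
      simp only [hF, Finset.mem_filter, Finset.mem_univ, true_and] at hg ⊢
      simp [RelIso.trans_apply, hφ, hg, hψ]
    · intro g hg
      simp only [hF, Finset.mem_filter, Finset.mem_univ, true_and] at hg ⊢
      have h1 : φ.symm k = k' := by rw [← hφ]; exact φ.symm_apply_apply k'
      have h2 : ψ.symm i' = i := by rw [← hψ]; exact ψ.symm_apply_apply i
      simp [RelIso.trans_apply, h1, hg, h2]
    · intro g hg
      ext x
      simp
    · intro g hg
      ext x
      simp
  obtain ⟨v⟩ := hV
  set c := (F v v).card with hc
  have hcpos : 0 < c := by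
    apply Finset.card_pos.mpr
    exact ⟨RelIso.refl _, by simp [hF]⟩
  -- card A = n * c
  have hAnc : A = n * c := by
    rw [hA, ← Finset.card_univ,
      Finset.card_eq_sum_card_fiberwise (f := fun g : G ≃g G => g v)
        (fun g _ => Finset.mem_univ (g v))]
    have : ∀ i : V, (Finset.univ.filter fun g : G ≃g G => g v = i).card = c :=
      fun i => hfib v i v v
    rw [Finset.sum_congr rfl fun i _ => this i, Finset.sum_const, Finset.card_univ,
      smul_eq_mul, hn]
  -- clique ∩ independent set has at most one vertex
  have key : ∀ g : G ≃g G, (K.image ⇑g ∩ I).card ≤ 1 := by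
    intro g
    apply Finset.card_le_one.mpr
    intro a ha b hb
    by_contra hab
    have haI : a ∈ I := (Finset.mem_inter.mp ha).2
    have hbI : b ∈ I := (Finset.mem_inter.mp hb).2
    obtain ⟨x, hx, hxa⟩ := Finset.mem_image.mp (Finset.mem_inter.mp ha).1
    obtain ⟨y, hy, hyb⟩ := Finset.mem_image.mp (Finset.mem_inter.mp hb).1
    have hxy : x ≠ y := by
      intro h; subst h; exact hab (hxa ▸ hyb ▸ rfl)
    have hadj : G.Adj a b := by
      rw [← hxa, ← hyb]
      exact g.map_adj_iff.mpr (hK.isClique hx hy hxy)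
    have hnadj : Gᶜ.Adj a b := hI.isClique haI hbI hab
    exact hnadj.2 hadj
  -- compute the double-counting sum
  have hsum : ∀ g : G ≃g G,
      (K.image ⇑g ∩ I).card = ∑ k ∈ K, ∑ i ∈ I, if g k = i then 1 else 0 := by
    intro g
    have himg : K.image ⇑g ∩ I = (K.filter fun k => g k ∈ I).image ⇑g := by
      ext x
      simp only [Finset.mem_inter, Finset.mem_image, Finset.mem_filter]
      constructor
      · rintro ⟨⟨k, hk, rfl⟩, hxI⟩; exact ⟨k, ⟨hk, hxI⟩, rfl⟩
      · rintro ⟨k, ⟨hk, hkI⟩, rfl⟩; exact ⟨⟨k, hk, rfl⟩, hkI⟩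
    rw [himg, Finset.card_image_of_injective _ g.injective, Finset.card_filter]
    refine Finset.sum_congr rfl fun k _ => ?_
    rw [← Finset.sum_ite_eq I (g k) (fun _ => 1)]
  have hS : ∑ g : G ≃g G, (K.image ⇑g ∩ I).card ≤ A := by
    calc ∑ g : G ≃g G, (K.image ⇑g ∩ I).card ≤ ∑ _g : G ≃g G, 1 :=
          Finset.sum_le_sum fun g _ => key g
      _ = A := by simp [hA]
  have hS' : ∑ g : G ≃g G, (K.image ⇑g ∩ I).card = K.card * I.card * c := by
    calc ∑ g : G ≃g G, (K.image ⇑g ∩ I).card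
        = ∑ g : G ≃g G, ∑ k ∈ K, ∑ i ∈ I, if g k = i then 1 else 0 :=
          Finset.sum_congr rfl fun g _ => hsum g
      _ = ∑ k ∈ K, ∑ i ∈ I, ∑ g : G ≃g G, if g k = i then 1 else 0 := by
          rw [Finset.sum_comm]
          exact Finset.sum_congr rfl fun k _ => Finset.sum_comm
      _ = ∑ k ∈ K, ∑ i ∈ I, c := by
          refine Finset.sum_congr rfl fun k _ => Finset.sum_congr rfl fun i _ => ?_
          rw [← Finset.card_filter]
          exact hfib k i v v
      _ = K.card * I.card * c := by
          simp [Finset.sum_const, mul_assoc]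
  have hmul : G.cliqueNum * G.indepNumCompl * c ≤ n * c := by
    have h1 : K.card * I.card * c ≤ n * c := by
      rw [← hS', ← hAnc]; exact hS
    rwa [hK.card_eq, hI.card_eq] at h1
  exact Nat.le_of_mul_le_mul_right hmul hcpos
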